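/- Let A be a d×n integer matrix with ker(A) ∩ ℕ^n = {0}, and let c ∈ ℚ^n. If every non-optimal point u ∈ ℕ^n of the family of integer programs min{c·v : Av = Au, v ∈ ℕ^n} dominates (componentwise) some 0/1 vector that is itself non-optimal, then for every feasible bounded right-hand side b the optimal values of the integer program and its LP relaxation coincide, i.e. gap(A,c) = 0. -/

import Mathlib

section Helpers

lemma rat_den_mul {q : ℚ} {N : ℕ} (h : q.den ∣ N) :
    (((N / q.den : ℕ) : ℚ)) * (q.num : ℚ) = (N : ℚ) * q := by
  obtain ⟨mm, hm⟩ := h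
  have h1 : ((N / q.den : ℕ) : ℚ) = (mm : ℚ) := by
    rw [hm, Nat.mul_div_cancel_left _ q.pos]
  rw [h1, hm]
  have h2 : (q.num : ℚ) = q * (q.den : ℚ) := by rw [Rat.mul_den_eq_num]
  rw [h2]; push_cast; ring

lemma rat_den_mul_real {q : ℚ} {N : ℕ} (h : q.den ∣ N) :
    (((N / q.den : ℕ) : ℝ)) * (q.num : ℝ) = (N : ℝ) * (q : ℝ) := by
  have h2 := congrArg (fun z : ℚ => (z : ℝ)) (rat_den_mul h)
  push_cast at h2
  exact h2

lemma exists_min_of_den (D : ℕ) (hD : 0 < D) (S : Set ℝ)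
    (hS : ∀ s ∈ S, ∃ k : ℤ, s = (k : ℝ) / D) (hne : S.Nonempty) (hbd : BddBelow S) :
    ∃ m ∈ S, ∀ s ∈ S, m ≤ s := by
  classical
  obtain ⟨L, hL⟩ := hbd
  set K : ℤ → Prop := fun k => ((k : ℝ) / D) ∈ S with hK
  have hDR : (0 : ℝ) < D := by exact_mod_cast hD
  have hbdd : ∀ k : ℤ, K k → ⌈L * D⌉ ≤ k := by
    intro k hk
    have h1 : L ≤ (k : ℝ) / D := hL hk
    have h2 : L * D ≤ (k : ℝ) := by
      rw [div_eq_mul_inv] at h1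
      calc L * D ≤ ((k : ℝ) * (D : ℝ)⁻¹) * D :=
            mul_le_mul_of_nonneg_right h1 hDR.le
        _ = (k : ℝ) := by field_simp
    exact Int.ceil_le.2 (h2.trans_eq (by norm_num))
  obtain ⟨s₀, hs₀⟩ := hne
  obtain ⟨k₀, hk₀⟩ := hS s₀ hs₀
  have hKne : ∃ k, K k := ⟨k₀, by rw [hK]; simpa [← hk₀] using hs₀⟩
  obtain ⟨lb, hlb, hlbmin⟩ := Int.exists_least_of_bdd ⟨⌈L * D⌉, hbdd⟩ hKne
  refine ⟨(lb : ℝ) / D, hlb, ?_⟩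
  intro s hs
  obtain ⟨k, hk⟩ := hS s hs
  have : lb ≤ k := hlbmin k (show ((k : ℝ) / D) ∈ S by rwa [← hk])
  rw [hk]
  gcongr

lemma dense_rat_ker {m' : Type*} [Fintype m'] {n : ℕ} (B : Matrix m' (Fin n) ℚ)
    (x : Fin n → ℝ) (hx : ∀ r, ∑ i, (B r i : ℝ) * x i = 0) {ε : ℝ} (hε : 0 < ε) :
    ∃ q : Fin n → ℚ, (∀ r, ∑ i, B r i * q i = 0) ∧ ∀ i, |(q i : ℝ) - x i| < ε := by
  classical
  set β := Module.Basis.ofVectorSpace ℚ ℝ with hβ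
  set T : Finset _ := Finset.univ.biUnion (fun i : Fin n => (β.repr (x i)).support) with hT
  set Q : _ → Fin n → ℚ := fun t i => β.repr (x i) t with hQ
  have hrep : ∀ i, x i = ∑ t ∈ T, (Q t i : ℝ) * β t := by
    intro i
    conv_lhs => rw [← β.linearCombination_repr (x i)]
    rw [Finsupp.linearCombination_apply, Finsupp.sum]
    rw [Finset.sum_subset (show (β.repr (x i)).support ⊆ T from
      fun t ht => Finset.mem_biUnion.2 ⟨i, Finset.mem_univ i, ht⟩)]
    · exact Finset.sum_congr rfl (fun t _ => by rw [Rat.smul_def])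
    · intro t _ ht
      simp [Finsupp.notMem_support_iff.1 ht]
  have hkerQ : ∀ t, ∀ r, ∑ i, B r i * Q t i = 0 := by
    intro t r
    have h0 : ∑ i, (B r i) • x i = (0 : ℝ) := by
      rw [← hx r]; exact Finset.sum_congr rfl fun i _ => (Rat.smul_def _ _)
    have := congrArg (fun y => β.repr y t) h0
    simpa [map_sum, Finsupp.smul_apply, smul_eq_mul, hQ] using this
  set C : ℝ := ∑ t ∈ T, ∑ i, |(Q t i : ℝ)| with hC
  have hC0 : 0 ≤ C := Finset.sum_nonneg fun t _ => Finset.sum_nonneg fun i _ => abs_nonneg _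
  have hδ : 0 < ε / (C + 1) := div_pos hε (by linarith)
  choose ρ hρ using fun t : _ => exists_rat_near (β t) hδ
  refine ⟨fun i => ∑ t ∈ T, ρ t * Q t i, ?_, ?_⟩
  · intro r
    have : ∑ i, B r i * ∑ t ∈ T, ρ t * Q t i
        = ∑ t ∈ T, ρ t * ∑ i, B r i * Q t i := by
      simp_rw [Finset.mul_sum]
      rw [Finset.sum_comm]
      exact Finset.sum_congr rfl fun t _ => Finset.sum_congr rfl fun i _ => by ring
    simp only [this, hkerQ, mul_zero, Finset.sum_const_zero]
  · intro i
    have key : (↑(∑ t ∈ T, ρ t * Q t i) : ℝ) - x i = ∑ t ∈ T, (↑(ρ t) - β t) * (Q t i : ℝ) := by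
      rw [hrep i]
      push_cast
      rw [← Finset.sum_sub_distrib]
      exact Finset.sum_congr rfl fun t _ => by ring
    rw [key]
    calc |∑ t ∈ T, (↑(ρ t) - β t) * (Q t i : ℝ)|
        ≤ ∑ t ∈ T, |(↑(ρ t) - β t)| * |(Q t i : ℝ)| := by
          refine (Finset.abs_sum_le_sum_abs _ _).trans ?_
          exact le_of_eq (Finset.sum_congr rfl fun t _ => abs_mul _ _)
      _ ≤ ∑ t ∈ T, (ε / (C + 1)) * |(Q t i : ℝ)| := by
          refine Finset.sum_le_sum fun t _ => ?_
          have := (hρ t).le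
          rw [abs_sub_comm] at this
          exact mul_le_mul_of_nonneg_right this (abs_nonneg _)
      _ = (ε / (C + 1)) * ∑ t ∈ T, |(Q t i : ℝ)| := by rw [Finset.mul_sum]
      _ ≤ (ε / (C + 1)) * C := by
          refine mul_le_mul_of_nonneg_left ?_ hδ.le
          rw [hC]
          refine Finset.sum_le_sum fun t _ => Finset.single_le_sum (f := fun j => |(Q t j : ℝ)|)
            (fun j _ => abs_nonneg _) (Finset.mem_univ i)
      _ < (ε / (C + 1)) * (C + 1) := by nlinarith
      _ = ε := div_mul_cancel₀ _ (by linarith)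

end Helpers

theorem stmt11 (d n : ℕ) (A : Matrix (Fin d) (Fin n) ℤ) (c : Fin n → ℚ)
    (hker : ∀ x : Fin n → ℤ, A.mulVec x = 0 → (∀ i, 0 ≤ x i) → x = 0)
    (hsf : ∀ u : Fin n → ℕ,
      (∃ v : Fin n → ℕ, A.mulVec (fun i => (v i : ℤ)) = A.mulVec (fun i => (u i : ℤ)) ∧
        ∑ i, (c i : ℝ) * (v i : ℝ) < ∑ i, (c i : ℝ) * (u i : ℝ)) →
      ∃ w : Fin n → ℕ, (∀ i, w i ≤ 1) ∧ (∀ i, w i ≤ u i) ∧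
        ∃ v : Fin n → ℕ, A.mulVec (fun i => (v i : ℤ)) = A.mulVec (fun i => (w i : ℤ)) ∧
          ∑ i, (c i : ℝ) * (v i : ℝ) < ∑ i, (c i : ℝ) * (w i : ℝ)) :
    ∀ b : Fin d → ℤ,
      {x : ℝ | ∃ u : Fin n → ℕ, A.mulVec (fun i => (u i : ℤ)) = b ∧
          x = ∑ i, (c i : ℝ) * (u i : ℝ)}.Nonempty →
      BddBelow {x : ℝ | ∃ u : Fin n → ℕ, A.mulVec (fun i => (u i : ℤ)) = b ∧
          x = ∑ i, (c i : ℝ) * (u i : ℝ)} →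
      sInf {x : ℝ | ∃ u : Fin n → ℕ, A.mulVec (fun i => (u i : ℤ)) = b ∧
          x = ∑ i, (c i : ℝ) * (u i : ℝ)} =
      sInf {x : ℝ | ∃ v : Fin n → ℝ, (∀ i, 0 ≤ v i) ∧
          (A.map (Int.cast : ℤ → ℝ)).mulVec v = (fun i => (b i : ℝ)) ∧
          x = ∑ i, (c i : ℝ) * v i} := by
  classical
  intro b hne hbd
  set S : Set ℝ := {x : ℝ | ∃ u : Fin n → ℕ, A.mulVec (fun i => (u i : ℤ)) = b ∧
      x = ∑ i, (c i : ℝ) * (u i : ℝ)} with hSdef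
  set L : Set ℝ := {x : ℝ | ∃ v : Fin n → ℝ, (∀ i, 0 ≤ v i) ∧
      (A.map (Int.cast : ℤ → ℝ)).mulVec v = (fun i => (b i : ℝ)) ∧
      x = ∑ i, (c i : ℝ) * v i} with hLdef
  -- casting mulVec componentwise
  have cast_mulVecQ : ∀ (x : Fin n → ℤ) (r : Fin d),
      (((A.mulVec x) r : ℤ) : ℚ) = ∑ i, (A r i : ℚ) * (x i : ℚ) := by
    intro x r
    simp only [Matrix.mulVec, dotProduct]
    push_cast
    rfl
  -- the minimum of the IP
  set D : ℕ := ∏ i, (c i).den with hDdef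
  have hDdvd : ∀ i, (c i).den ∣ D := fun i => Finset.dvd_prod_of_mem _ (Finset.mem_univ i)
  have hD : 0 < D := Finset.prod_pos fun i _ => (c i).pos
  have hDR : (0 : ℝ) < D := by exact_mod_cast hD
  have hform : ∀ s ∈ S, ∃ k : ℤ, s = (k : ℝ) / D := by
    intro s hs
    obtain ⟨u, hu, hval⟩ := hs
    refine ⟨∑ i, ((D / (c i).den : ℕ) : ℤ) * (c i).num * (u i : ℤ), ?_⟩
    rw [hval, eq_div_iff (ne_of_gt hDR)]
    push_cast
    rw [Finset.sum_mul]
    refine Finset.sum_congr rfl fun i _ => ?_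
    have := rat_den_mul_real (hDdvd i)
    calc (c i : ℝ) * (u i : ℝ) * (D : ℝ) = ((D : ℝ) * (c i : ℝ)) * (u i : ℝ) := by ring
      _ = (((D / (c i).den : ℕ) : ℝ) * ((c i).num : ℝ)) * (u i : ℝ) := by rw [this]
  obtain ⟨m, hmS, hmle⟩ := exists_min_of_den D hD S hform hne hbd
  obtain ⟨u₀, hu₀, hm⟩ := hmS
  -- feasibility of u₀ over ℚ
  have hu₀Q : ∀ r, ∑ i, (A r i : ℚ) * (u₀ i : ℚ) = (b r : ℚ) := by
    intro r
    have h1 := cast_mulVecQ (fun i => (u₀ i : ℤ)) r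
    rw [show A.mulVec (fun i => ((u₀ i : ℕ) : ℤ)) r = b r from congrFun hu₀ r] at h1
    push_cast at h1
    exact h1.symm
  -- Step B : no rational feasible point beats m
  have hrat : ∀ q : Fin n → ℚ, (∀ i, 0 ≤ q i) →
      (∀ r, ∑ i, (A r i : ℚ) * q i = (b r : ℚ)) →
      m ≤ ∑ i, (c i : ℝ) * ((q i : ℚ) : ℝ) := by
    intro q hq0 hqfeas
    by_contra hlt
    push_neg at hlt
    set N : ℕ := ∏ i, (q i).den with hNdef
    have hNdvd : ∀ i, (q i).den ∣ N := fun i => Finset.dvd_prod_of_mem _ (Finset.mem_univ i)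
    have hN : 0 < N := Finset.prod_pos fun i _ => (q i).pos
    have hNR : (0 : ℝ) < N := by exact_mod_cast hN
    have hv : ∀ i, ∃ k : ℕ, (k : ℚ) = (N : ℚ) * q i := by
      intro i
      refine ⟨(N / (q i).den : ℕ) * (q i).num.toNat, ?_⟩
      have hnum : (0 : ℤ) ≤ (q i).num := Rat.num_nonneg.2 (hq0 i)
      have hcast : (((q i).num.toNat : ℤ) : ℚ) = ((q i).num : ℚ) := by
        exact_mod_cast congrArg (fun z : ℤ => (z : ℚ)) (Int.toNat_of_nonneg hnum)
      push_cast at hcast ⊢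
      rw [hcast]
      exact rat_den_mul (hNdvd i)
    choose v hvq using hv
    have hvqR : ∀ i, (v i : ℝ) = (N : ℝ) * (q i : ℝ) := by
      intro i
      have := congrArg (fun z : ℚ => (z : ℝ)) (hvq i)
      push_cast at this
      exact this
    have h1 : A.mulVec (fun i => (v i : ℤ)) = A.mulVec (fun i => ((N * u₀ i : ℕ) : ℤ)) := by
      funext r
      apply (Int.cast_injective (α := ℚ))
      rw [cast_mulVecQ, cast_mulVecQ]
      push_cast
      calc ∑ i, (A r i : ℚ) * (v i : ℚ)
          = (N : ℚ) * ∑ i, (A r i : ℚ) * q i := by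
            rw [Finset.mul_sum]
            exact Finset.sum_congr rfl fun i _ => by rw [hvq i]; ring
        _ = (N : ℚ) * (b r : ℚ) := by rw [hqfeas r]
        _ = (N : ℚ) * ∑ i, (A r i : ℚ) * (u₀ i : ℚ) := by rw [hu₀Q r]
        _ = ∑ i, (A r i : ℚ) * ((N : ℚ) * (u₀ i : ℚ)) := by
            rw [Finset.mul_sum]
            exact Finset.sum_congr rfl fun i _ => by ring
    have h2 : ∑ i, (c i : ℝ) * (v i : ℝ) < ∑ i, (c i : ℝ) * ((N * u₀ i : ℕ) : ℝ) := by
      have hL : ∑ i, (c i : ℝ) * (v i : ℝ) = (N : ℝ) * ∑ i, (c i : ℝ) * (q i : ℝ) := by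
        rw [Finset.mul_sum]
        exact Finset.sum_congr rfl fun i _ => by rw [hvqR i]; ring
      have hR : ∑ i, (c i : ℝ) * ((N * u₀ i : ℕ) : ℝ) = (N : ℝ) * ∑ i, (c i : ℝ) * (u₀ i : ℝ) := by
        rw [Finset.mul_sum]
        refine Finset.sum_congr rfl fun i _ => ?_
        push_cast
        ring
      rw [hL, hR, ← hm]
      exact mul_lt_mul_of_pos_left hlt hNR
    obtain ⟨w, hw1, hw2, v', hv'feas, hv'cost⟩ := hsf (fun i => N * u₀ i) ⟨v, h1, h2⟩
    have hwu : ∀ i, w i ≤ u₀ i := by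
      intro i
      have ha := hw1 i
      have hb := hw2 i
      rcases Nat.eq_zero_or_pos (u₀ i) with h | h
      · simp only [h, Nat.mul_zero] at hb; omega
      · omega
    have hfeas'' : A.mulVec (fun i => ((u₀ i - w i + v' i : ℕ) : ℤ)) = b := by
      funext r
      have e1 := congrFun hu₀ r
      have e2 := congrFun hv'feas r
      simp only [Matrix.mulVec, dotProduct] at e1 e2 ⊢
      calc ∑ i, A r i * ((u₀ i - w i + v' i : ℕ) : ℤ)
          = (∑ i, A r i * (u₀ i : ℤ)) - (∑ i, A r i * (w i : ℤ)) + ∑ i, A r i * (v' i : ℤ) := by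
            rw [← Finset.sum_sub_distrib, ← Finset.sum_add_distrib]
            refine Finset.sum_congr rfl fun i _ => ?_
            rw [Nat.cast_add, Nat.cast_sub (hwu i)]
            ring
        _ = b r := by rw [e1, e2]; ring
    have hval'' : ∑ i, (c i : ℝ) * ((u₀ i - w i + v' i : ℕ) : ℝ) < m := by
      have : ∑ i, (c i : ℝ) * ((u₀ i - w i + v' i : ℕ) : ℝ)
          = (∑ i, (c i : ℝ) * (u₀ i : ℝ)) - (∑ i, (c i : ℝ) * (w i : ℝ))
            + ∑ i, (c i : ℝ) * (v' i : ℝ) := by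
        rw [← Finset.sum_sub_distrib, ← Finset.sum_add_distrib]
        refine Finset.sum_congr rfl fun i _ => ?_
        rw [Nat.cast_add, Nat.cast_sub (hwu i)]
        ring
      rw [this, ← hm]
      linarith
    have hmem : (∑ i, (c i : ℝ) * ((u₀ i - w i + v' i : ℕ) : ℝ)) ∈ S :=
      ⟨fun i => u₀ i - w i + v' i, hfeas'', rfl⟩
    exact absurd (hmle _ hmem) (not_le.2 hval'')
  -- Step C : no real feasible point beats m
  have hu₀R : ∀ r, ∑ i, (A r i : ℝ) * (u₀ i : ℝ) = (b r : ℝ) := by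
    intro r
    have := congrArg (fun z : ℚ => (z : ℝ)) (hu₀Q r)
    push_cast at this
    exact this
  have hreal : ∀ v : Fin n → ℝ, (∀ i, 0 ≤ v i) →
      (∀ r, ∑ i, (A r i : ℝ) * v i = (b r : ℝ)) →
      m ≤ ∑ i, (c i : ℝ) * v i := by
    intro vv hv0 hvfeas
    by_contra hlt
    push_neg at hlt
    set wmid : Fin n → ℝ := fun i => (vv i + (u₀ i : ℝ)) / 2 with hwmid
    set x : Fin n → ℝ := fun i => wmid i - (u₀ i : ℝ) with hx
    set Z : Fin n → Prop := fun j => vv j = 0 ∧ u₀ j = 0 with hZ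
    set B : Matrix (Fin d ⊕ Fin n) (Fin n) ℚ :=
      Sum.elim (fun r i => (A r i : ℚ)) (fun j i => if Z j ∧ i = j then 1 else 0) with hB
    have hBred : ∀ j, ∀ qk : Fin n → ℚ,
        ∑ i, B (Sum.inr j) i * qk i = if Z j then qk j else 0 := by
      intro j qk
      by_cases hj : Z j
      · rw [if_pos hj]
        rw [show ∑ i, B (Sum.inr j) i * qk i = ∑ i, if i = j then qk i else 0 from
          Finset.sum_congr rfl fun i _ => by
            by_cases h : i = j
            · subst h
              simp only [hB, Sum.elim_inr]
              rw [if_pos ⟨hj, trivial⟩]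
              simp
            · simp only [hB, Sum.elim_inr]
              rw [if_neg (fun hc => h hc.2), if_neg h, zero_mul]]
        simp
      · rw [if_neg hj]
        refine Finset.sum_eq_zero fun i _ => ?_
        simp [hB, hj]
    have hBredR : ∀ j, ∀ y : Fin n → ℝ,
        ∑ i, (B (Sum.inr j) i : ℝ) * y i = if Z j then y j else 0 := by
      intro j y
      by_cases hj : Z j
      · rw [if_pos hj]
        rw [show ∑ i, ((B (Sum.inr j) i : ℚ) : ℝ) * y i = ∑ i, if i = j then y i else 0 from
          Finset.sum_congr rfl fun i _ => by
            by_cases h : i = j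
            · subst h
              simp only [hB, Sum.elim_inr]
              rw [if_pos ⟨hj, trivial⟩]
              simp
            · simp only [hB, Sum.elim_inr]
              rw [if_neg (fun hc => h hc.2), if_neg h]
              norm_num]
        simp
      · rw [if_neg hj]
        refine Finset.sum_eq_zero fun i _ => ?_
        simp [hB, hj]
    have hxker : ∀ r, ∑ i, (B r i : ℝ) * x i = 0 := by
      rintro (r | j)
      · have e1 := hvfeas r
        have e2 := hu₀R r
        have hterm : ∀ i : Fin n, ((B (Sum.inl r) i : ℚ) : ℝ) * x i
            = ((A r i : ℝ) * vv i - (A r i : ℝ) * (u₀ i : ℝ)) / 2 := by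
          intro i
          simp only [hB, Sum.elim_inl, hx, hwmid]
          push_cast
          ring
        rw [Finset.sum_congr rfl fun i _ => hterm i, ← Finset.sum_div,
          Finset.sum_sub_distrib, e1, e2]
        ring
      · rw [hBredR j x]
        by_cases hj : Z j
        · rw [if_pos hj]
          simp only [hx, hwmid, hj.1, (show u₀ j = 0 from hj.2)]
          norm_num
        · rw [if_neg hj]
    set G : ℝ := (m - ∑ i, (c i : ℝ) * vv i) / 2 with hG
    have hG0 : 0 < G := by rw [hG]; linarith
    have hxc : ∑ i, (c i : ℝ) * x i = -G := by
      have hterm : ∀ i : Fin n, (c i : ℝ) * x i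
          = ((c i : ℝ) * vv i - (c i : ℝ) * (u₀ i : ℝ)) / 2 := by
        intro i
        simp only [hx, hwmid]
        ring
      rw [Finset.sum_congr rfl fun i _ => hterm i, ← Finset.sum_div,
        Finset.sum_sub_distrib, ← hm, hG]
      ring
    set Cc : ℝ := ∑ i, |(c i : ℝ)| with hCc
    have hCc0 : 0 ≤ Cc := Finset.sum_nonneg fun i _ => abs_nonneg _
    set ε₂ : ℝ := G / (Cc + 1) with hε₂
    have hε₂0 : 0 < ε₂ := div_pos hG0 (by linarith)
    set F : Finset (Fin n) := Finset.univ.filter (fun i => ¬ Z i) with hF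
    have hwpos : ∀ i ∈ F, 0 < wmid i := by
      intro i hi
      have hnz : ¬ Z i := (Finset.mem_filter.1 hi).2
      have : 0 < vv i + (u₀ i : ℝ) := by
        rcases (not_and_or.1 hnz) with h | h
        · have := lt_of_le_of_ne (hv0 i) (Ne.symm h)
          positivity
        · have h1 : 0 < u₀ i := Nat.pos_of_ne_zero h
          have h2 : (0 : ℝ) < (u₀ i : ℝ) := by exact_mod_cast h1
          have := hv0 i
          linarith
      simp only [hwmid]
      linarith
    set ε₁ : ℝ := if h : F.Nonempty then F.inf' h wmid else 1 with hε₁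
    have hε₁0 : 0 < ε₁ := by
      rw [hε₁]
      split_ifs with h
      · exact (Finset.lt_inf'_iff h).2 fun i hi => hwpos i hi
      · norm_num
    have hε₁le : ∀ i ∈ F, ε₁ ≤ wmid i := by
      intro i hi
      rw [hε₁, dif_pos ⟨i, hi⟩]
      exact Finset.inf'_le _ hi
    have hε0 : 0 < min ε₁ ε₂ := lt_min hε₁0 hε₂0
    obtain ⟨qk, hqker, hqnear⟩ := dense_rat_ker B x hxker hε0
    have hq0Z : ∀ j, Z j → qk j = 0 := by
      intro j hj
      have := hqker (Sum.inr j)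
      rwa [hBred j qk, if_pos hj] at this
    set qf : Fin n → ℚ := fun i => (u₀ i : ℚ) + qk i with hqf
    have hqfR : ∀ i, ((qf i : ℚ) : ℝ) = (u₀ i : ℝ) + ((qk i : ℚ) : ℝ) := by
      intro i
      simp only [hqf]
      push_cast
      ring
    have hqf0 : ∀ i, 0 ≤ qf i := by
      intro i
      by_cases hi : Z i
      · simp only [hqf, hq0Z i hi, add_zero]
        positivity
      · have hiF : i ∈ F := Finset.mem_filter.2 ⟨Finset.mem_univ i, hi⟩
        have h1 : |(qk i : ℝ) - x i| < min ε₁ ε₂ := hqnear i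
        have h2 : x i - min ε₁ ε₂ < (qk i : ℝ) := by
          have := (abs_lt.1 h1).1
          linarith
        have h3 : (0 : ℝ) ≤ (qf i : ℝ) := by
          rw [hqfR i]
          have hxi : x i = wmid i - (u₀ i : ℝ) := by simp only [hx]
          have h4 : ε₁ ≤ wmid i := hε₁le i hiF
          have h5 : min ε₁ ε₂ ≤ ε₁ := min_le_left _ _
          linarith
        exact_mod_cast h3
    have hqffeas : ∀ r, ∑ i, (A r i : ℚ) * qf i = (b r : ℚ) := by
      intro r
      have hk := hqker (Sum.inl r)
      have hk' : ∑ i, (A r i : ℚ) * qk i = 0 := by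
        rw [← hk]
        exact Finset.sum_congr rfl fun i _ => by simp [hB]
      have : ∑ i, (A r i : ℚ) * qf i
          = (∑ i, (A r i : ℚ) * (u₀ i : ℚ)) + ∑ i, (A r i : ℚ) * qk i := by
        rw [← Finset.sum_add_distrib]
        exact Finset.sum_congr rfl fun i _ => by simp only [hqf]; ring
      rw [this, hu₀Q r, hk', add_zero]
    have hqfval : ∑ i, (c i : ℝ) * ((qf i : ℚ) : ℝ) < m := by
      have hsplit : ∑ i, (c i : ℝ) * ((qf i : ℚ) : ℝ)
          = m + ∑ i, (c i : ℝ) * ((qk i : ℚ) : ℝ) := by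
        rw [hm, ← Finset.sum_add_distrib]
        exact Finset.sum_congr rfl fun i _ => by rw [hqfR i]; ring
      have hbound : ∑ i, (c i : ℝ) * ((qk i : ℚ) : ℝ) < 0 := by
        have hdiff : ∑ i, (c i : ℝ) * ((qk i : ℚ) : ℝ) - ∑ i, (c i : ℝ) * x i
            ≤ Cc * min ε₁ ε₂ := by
          rw [← Finset.sum_sub_distrib]
          calc ∑ i, ((c i : ℝ) * ((qk i : ℚ) : ℝ) - (c i : ℝ) * x i)
              ≤ ∑ i, |(c i : ℝ)| * |((qk i : ℚ) : ℝ) - x i| := by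
                refine Finset.sum_le_sum fun i _ => ?_
                rw [← mul_sub]
                exact (le_abs_self _).trans (le_of_eq (abs_mul _ _))
            _ ≤ ∑ i, |(c i : ℝ)| * min ε₁ ε₂ := by
                refine Finset.sum_le_sum fun i _ => ?_
                exact mul_le_mul_of_nonneg_left (hqnear i).le (abs_nonneg _)
            _ = Cc * min ε₁ ε₂ := by rw [hCc, Finset.sum_mul]
        have h6 : Cc * min ε₁ ε₂ ≤ Cc * ε₂ :=
          mul_le_mul_of_nonneg_left (min_le_right _ _) hCc0
        have h7 : Cc * ε₂ < (Cc + 1) * ε₂ := by nlinarith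
        have h8 : (Cc + 1) * ε₂ = G := by rw [hε₂]; field_simp
        have := hxc
        linarith
      linarith
    exact absurd (hrat qf hqf0 hqffeas) (not_le.2 hqfval)
  -- conclusion
  have hSleast : IsLeast S m := ⟨⟨u₀, hu₀, hm⟩, fun s hs => hmle s hs⟩
  have hLleast : IsLeast L m := by
    constructor
    · refine ⟨fun i => (u₀ i : ℝ), fun i => by positivity, ?_, hm⟩
      funext r
      simp only [Matrix.mulVec, dotProduct, Matrix.map_apply]
      have := hu₀Q r
      have : ∑ i, (A r i : ℝ) * (u₀ i : ℝ) = (b r : ℝ) := by exact_mod_cast this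
      simpa using this
    · rintro x ⟨v, hv0, hvfeas, hval⟩
      rw [hval]
      refine hreal v hv0 fun r => ?_
      have := congrFun hvfeas r
      simpa [Matrix.mulVec, dotProduct, Matrix.map_apply] using this
  rw [hSleast.csInf_eq, hLleast.csInf_eq]
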